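/- If ⟨g, Qⁿg⟩ ~ 1/n as n → ∞ and σ_n² = n‖g‖² + 2∑_{k=1}^{n-1}(n-k)⟨g,Q^k g⟩ with ‖g‖ = 1, then σ_n² ~ 2n·log(n); in particular σ_n² = nℓ(n) with ℓ(n) ~ 2 log n slowly varying. -/

import Mathlib

open Filter Finset Topology

private lemma log_nat_atTop : Tendsto (fun n : ℕ => Real.log n) atTop atTop :=
  Real.tendsto_log_atTop.comp tendsto_natCast_atTop_atTop

private lemma sum_a_div_log (a : ℕ → ℝ)
    (halim : Tendsto (fun k : ℕ => (k : ℝ) * a k) atTop (𝓝 1)) :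
    Tendsto (fun n : ℕ => (∑ k ∈ range n, a k) / Real.log n) atTop (𝓝 1) := by
  set H : ℕ → ℝ := fun n => ∑ k ∈ range n, ((k : ℝ) + 1)⁻¹ with hHdef
  have hcast : ∀ n : ℕ, ((harmonic n : ℚ) : ℝ) = H n := by
    intro n
    rw [harmonic, hHdef]
    push_cast
    rfl
  have ha0 : Tendsto a atTop (𝓝 0) := by
    have h1 : Tendsto (fun k : ℕ => ((k : ℝ) * a k) * (k : ℝ)⁻¹) atTop (𝓝 (1 * 0)) :=
      halim.mul (tendsto_inv_atTop_zero.comp tendsto_natCast_atTop_atTop)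
    rw [one_mul] at h1
    apply h1.congr'
    filter_upwards [eventually_ge_atTop 1] with k hk
    have hk0 : (k : ℝ) ≠ 0 := Nat.cast_ne_zero.2 (by omega)
    field_simp
  have hHlog : Tendsto (fun n : ℕ => H n - Real.log n) atTop (𝓝 Real.eulerMascheroniConstant) := by
    apply Real.tendsto_harmonic_sub_log.congr
    intro n
    rw [hcast]
  have hHtop : Tendsto H atTop atTop := by
    have := hHlog.add_atTop log_nat_atTop
    exact this.congr (fun n => by ring)
  have hfo : (fun k : ℕ => a k - ((k : ℝ) + 1)⁻¹) =o[atTop] (fun k : ℕ => ((k : ℝ) + 1)⁻¹) := by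
    rw [Asymptotics.isLittleO_iff_tendsto (fun k hk => absurd hk (by positivity))]
    have h2 : Tendsto (fun k : ℕ => (k : ℝ) * a k + a k - 1) atTop (𝓝 (1 + 0 - 1)) :=
      (halim.add ha0).sub tendsto_const_nhds
    rw [add_zero, sub_self] at h2
    apply h2.congr
    intro k
    have hk : ((k : ℝ) + 1) ≠ 0 := by positivity
    field_simp
  have hsum := hfo.sum_range (fun i => by positivity) hHtop
  have hdiv : Tendsto (fun n : ℕ =>
      (∑ k ∈ range n, (a k - ((k : ℝ) + 1)⁻¹)) / H n) atTop (𝓝 0) :=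
    hsum.tendsto_div_nhds_zero
  have hHdivlog : Tendsto (fun n : ℕ => H n / Real.log n) atTop (𝓝 1) := by
    have h3 : Tendsto (fun n : ℕ =>
        (H n - Real.log n) / Real.log n + Real.log n / Real.log n) atTop (𝓝 (0 + 1)) := by
      refine Tendsto.add (hHlog.div_atTop log_nat_atTop) ?_
      refine tendsto_const_nhds.congr' ?_
      filter_upwards [eventually_ge_atTop 2] with n hn
      have h1n : (1 : ℝ) < n := by exact_mod_cast Nat.one_lt_cast.2 (by omega)
      rw [div_self (Real.log_pos h1n).ne']
    rw [zero_add] at h3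
    apply h3.congr
    intro n
    rw [← add_div, sub_add_cancel]
  have h4 : Tendsto (fun n : ℕ =>
      ((∑ k ∈ range n, (a k - ((k : ℝ) + 1)⁻¹)) / H n) * (H n / Real.log n) + H n / Real.log n)
      atTop (𝓝 (0 * 1 + 1)) := (hdiv.mul hHdivlog).add hHdivlog
  rw [zero_mul, zero_add] at h4
  apply h4.congr'
  filter_upwards [eventually_ge_atTop 2] with n hn
  have h1n : (1 : ℝ) < n := by exact_mod_cast Nat.one_lt_cast.2 (by omega)
  have hL : Real.log n ≠ 0 := (Real.log_pos h1n).ne'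
  have hHpos : 0 < H n := by
    rw [← hcast]
    exact_mod_cast harmonic_pos (n := n) (by omega)
  have hH0 : H n ≠ 0 := hHpos.ne'
  set S := ∑ k ∈ range n, (a k - ((k : ℝ) + 1)⁻¹) with hSdef
  have key : (∑ k ∈ range n, a k) = S + H n := by
    rw [hSdef, sum_sub_distrib]; ring
  rw [key]
  field_simp

/-- if `a_k = ⟨g, Q^k g⟩ ≥ 0` satisfies `a_k ∼ 1/k` and
`σ_n² = n + 2 ∑_{k=1}^{n-1} (n-k) a_k` (for a unit vector `g`), then
`σ_n² ∼ 2 n log n`; in particular `σ_n² = n ℓ(n)` with `ℓ(n) = σ_n²/n ∼ 2 log n`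
slowly varying. -/
theorem variance_two_n_log_n
    (a : ℕ → ℝ) (ha : ∀ k, 0 ≤ a k)
    (halim : Tendsto (fun k : ℕ => (k : ℝ) * a k) atTop (𝓝 1))
    (σsq : ℕ → ℝ)
    (hσ : ∀ n : ℕ, σsq n = n + 2 * ∑ k ∈ Finset.Ico 1 n, ((n : ℝ) - k) * a k) :
    Tendsto (fun n : ℕ => σsq n / (2 * n * Real.log n)) atTop (𝓝 1) ∧
    (∀ t : ℝ, 0 < t →
      Tendsto (fun n : ℕ => (σsq ⌊t * n⌋₊ / (⌊t * n⌋₊ : ℝ)) / (σsq n / n))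
        atTop (𝓝 1)) := by
  have hL1 : Tendsto (fun n : ℕ => σsq n / (2 * n * Real.log n)) atTop (𝓝 1) := by
    have hces := halim.cesaro
    have hS := sum_a_div_log a halim
    have t1 : Tendsto (fun n : ℕ => 1 / (2 * Real.log n)) atTop (𝓝 0) :=
      tendsto_const_nhds.div_atTop (log_nat_atTop.const_mul_atTop two_pos)
    have t3 : Tendsto (fun n : ℕ =>
        (((n : ℝ))⁻¹ * ∑ i ∈ range n, (i : ℝ) * a i) / Real.log n) atTop (𝓝 0) :=
      hces.div_atTop log_nat_atTop
    have t2 : Tendsto (fun n : ℕ =>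
        ((∑ k ∈ range n, a k) - a 0) / Real.log n) atTop (𝓝 (1 - 0)) := by
      have hc : Tendsto (fun n : ℕ => a 0 / Real.log n) atTop (𝓝 0) :=
        tendsto_const_nhds.div_atTop log_nat_atTop
      exact (hS.sub hc).congr (fun n => by rw [sub_div])
    rw [sub_zero] at t2
    have tot : Tendsto (fun n : ℕ =>
        1 / (2 * Real.log n) + ((∑ k ∈ range n, a k) - a 0) / Real.log n
          - (((n : ℝ))⁻¹ * ∑ i ∈ range n, (i : ℝ) * a i) / Real.log n)
        atTop (𝓝 (0 + 1 - 0)) := (t1.add t2).sub t3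
    rw [zero_add, sub_zero] at tot
    apply tot.congr'
    filter_upwards [eventually_ge_atTop 2] with n hn
    have hn0 : 0 < n := by omega
    have hnR : (n : ℝ) ≠ 0 := Nat.cast_ne_zero.2 hn0.ne'
    have h1n : (1 : ℝ) < n := by exact_mod_cast Nat.one_lt_cast.2 (by omega)
    have hLg : Real.log n ≠ 0 := (Real.log_pos h1n).ne'
    have e1 : (∑ k ∈ range n, a k) = a 0 + ∑ k ∈ Ico 1 n, a k := by
      rw [range_eq_Ico, sum_eq_sum_Ico_succ_bot hn0]
    have e2 : (∑ i ∈ range n, (i : ℝ) * a i) = ∑ i ∈ Ico 1 n, (i : ℝ) * a i := by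
      rw [range_eq_Ico, sum_eq_sum_Ico_succ_bot hn0]
      simp
    have e3 : ∑ k ∈ Ico 1 n, ((n : ℝ) - k) * a k
        = (n : ℝ) * (∑ k ∈ Ico 1 n, a k) - ∑ k ∈ Ico 1 n, (k : ℝ) * a k := by
      rw [mul_sum, ← sum_sub_distrib]
      exact sum_congr rfl (fun k _ => by ring)
    rw [hσ n, e3, e1, e2]
    field_simp
    ring
  refine ⟨hL1, ?_⟩
  intro t ht
  have hσpos : ∀ n : ℕ, 1 ≤ n → 0 < σsq n := by
    intro n hn
    rw [hσ n]
    have hs : (0 : ℝ) ≤ ∑ k ∈ Ico 1 n, ((n : ℝ) - k) * a k := by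
      refine sum_nonneg (fun k hk => mul_nonneg ?_ (ha k))
      have hk2 : k < n := (mem_Ico.1 hk).2
      have : (k : ℝ) ≤ n := Nat.cast_le.2 hk2.le
      linarith
    have hn0 : (0 : ℝ) < n := by exact_mod_cast hn
    linarith
  have htn : Tendsto (fun n : ℕ => t * (n : ℝ)) atTop atTop :=
    tendsto_natCast_atTop_atTop.const_mul_atTop ht
  have hm : Tendsto (fun n : ℕ => ⌊t * (n : ℝ)⌋₊) atTop atTop :=
    tendsto_nat_floor_atTop.comp htn
  have hLm : Tendsto (fun n : ℕ => σsq ⌊t * (n : ℝ)⌋₊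
      / (2 * (⌊t * (n : ℝ)⌋₊ : ℝ) * Real.log (⌊t * (n : ℝ)⌋₊ : ℝ))) atTop (𝓝 1) :=
    hL1.comp hm
  -- log ratio → 1
  have hsq : Tendsto (fun n : ℕ =>
      Real.log (⌊t * (n : ℝ)⌋₊ : ℝ) - Real.log (t * n)) atTop (𝓝 0) := by
    have hlow := (Real.tendsto_log_comp_add_sub_log (-1)).comp htn
    refine tendsto_of_tendsto_of_tendsto_of_le_of_le' hlow tendsto_const_nhds ?_ ?_
    · filter_upwards [htn.eventually_ge_atTop 2] with n h2
      simp only [Function.comp_apply]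
      have h1 : (0 : ℝ) < t * n + (-1) := by linarith
      have h2' : (t * (n : ℝ) - 1) ≤ (⌊t * (n : ℝ)⌋₊ : ℝ) := (Nat.sub_one_lt_floor _).le
      have hle : Real.log (t * n + (-1)) ≤ Real.log (⌊t * (n : ℝ)⌋₊ : ℝ) :=
        Real.log_le_log h1 (by linarith)
      linarith
    · filter_upwards [htn.eventually_ge_atTop 2] with n h2
      have hfl : 1 ≤ ⌊t * (n : ℝ)⌋₊ := Nat.le_floor (by push_cast; linarith)
      have hfl' : (0 : ℝ) < (⌊t * (n : ℝ)⌋₊ : ℝ) := by exact_mod_cast hfl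
      have hle : Real.log (⌊t * (n : ℝ)⌋₊ : ℝ) ≤ Real.log (t * n) :=
        Real.log_le_log hfl' (Nat.floor_le (by linarith))
      linarith
  have hD : Tendsto (fun n : ℕ =>
      Real.log (⌊t * (n : ℝ)⌋₊ : ℝ) - Real.log n) atTop (𝓝 (0 + Real.log t)) := by
    apply (hsq.add tendsto_const_nhds).congr'
    filter_upwards [eventually_ge_atTop 1] with n hn
    have hn0 : (0 : ℝ) < n := by exact_mod_cast hn
    rw [Real.log_mul ht.ne' hn0.ne']
    ring
  have hlr : Tendsto (fun n : ℕ =>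
      Real.log (⌊t * (n : ℝ)⌋₊ : ℝ) / Real.log n) atTop (𝓝 1) := by
    have h5 : Tendsto (fun n : ℕ =>
        (Real.log (⌊t * (n : ℝ)⌋₊ : ℝ) - Real.log n) / Real.log n + 1) atTop (𝓝 (0 + 1)) :=
      (hD.div_atTop log_nat_atTop).add tendsto_const_nhds
    rw [zero_add] at h5
    apply h5.congr'
    filter_upwards [eventually_ge_atTop 2] with n hn
    have h1n : (1 : ℝ) < n := by exact_mod_cast Nat.one_lt_cast.2 (by omega)
    have hLg : Real.log n ≠ 0 := (Real.log_pos h1n).ne'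
    field_simp
    ring
  have tot : Tendsto (fun n : ℕ =>
      (σsq ⌊t * (n : ℝ)⌋₊ / (2 * (⌊t * (n : ℝ)⌋₊ : ℝ) * Real.log (⌊t * (n : ℝ)⌋₊ : ℝ))
        / (σsq n / (2 * (n : ℝ) * Real.log n)))
      * (Real.log (⌊t * (n : ℝ)⌋₊ : ℝ) / Real.log n)) atTop (𝓝 (1 / 1 * 1)) :=
    (hLm.div hL1 one_ne_zero).mul hlr
  rw [div_one, one_mul] at tot
  apply tot.congr'
  filter_upwards [eventually_ge_atTop 2, hm.eventually_ge_atTop 2] with n hn hmn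
  set m := ⌊t * (n : ℝ)⌋₊ with hmdef
  have hn0 : 0 < n := by omega
  have hnR : (n : ℝ) ≠ 0 := Nat.cast_ne_zero.2 hn0.ne'
  have hmR : (m : ℝ) ≠ 0 := Nat.cast_ne_zero.2 (by omega)
  have h1n : (1 : ℝ) < (n : ℝ) := by exact_mod_cast (by omega : 1 < n)
  have h1m : (1 : ℝ) < (m : ℝ) := by exact_mod_cast (by omega : 1 < m)
  have hLn : Real.log n ≠ 0 := (Real.log_pos h1n).ne'
  have hLm' : Real.log m ≠ 0 := (Real.log_pos h1m).ne'
  have hσn : σsq n ≠ 0 := (hσpos n (by omega)).ne'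
  field_simp
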